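/- Let K1 and K2 be quantum channels with fixed points ρ1 and ρ2 respectively. Suppose τ is a positive integer with sup_ρ ‖K1^τ[ρ] − ρ1‖₁ ≤ ε/2 and τ·‖K1 − K2‖_{1→1} ≤ ε/2. Then for every density matrix ρ, ‖K2^τ[ρ] − ρ2‖₁ ≤ 2ε. (In particular the mixing time of K2 to accuracy 2ε is at most τ.) -/

import Mathlib

open MeasureTheory Matrix
open scoped ComplexOrder

/-- The trace norm (Schatten 1-norm) of a complex square matrix. -/
noncomputable def traceNorm {n : Type*} [Fintype n] [DecidableEq n] (A : Matrix n n ℂ) : ℝ :=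
  (((Matrix.posSemidef_conjTranspose_mul_self A).1.eigenvectorUnitary.1 *
    Matrix.diagonal (((↑) : ℝ → ℂ) ∘ (Real.sqrt ·) ∘ (Matrix.posSemidef_conjTranspose_mul_self A).1.eigenvalues) *
    (star (Matrix.posSemidef_conjTranspose_mul_self A).1.eigenvectorUnitary : Matrix n n ℂ)).trace).re

/-- The operator norm (Schatten ∞-norm) of a complex square matrix. -/
noncomputable def opNorm {n : Type*} [Fintype n] [DecidableEq n] (A : Matrix n n ℂ) : ℝ :=
  ‖Matrix.toEuclideanCLM (𝕜 := ℂ) (n := n) A‖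

/-- A density matrix: positive semidefinite with unit trace. -/
def IsDensityMatrix {n : Type*} [Fintype n] [DecidableEq n] (ρ : Matrix n n ℂ) : Prop :=
  ρ.PosSemidef ∧ ρ.trace = 1

def IsTracePreserving {n : Type*} [Fintype n] [DecidableEq n]
    (Φ : Matrix n n ℂ →ₗ[ℂ] Matrix n n ℂ) : Prop :=
  ∀ A, (Φ A).trace = A.trace

/-- Complete positivity: all finite ampliations map positive semidefinite matrices to
positive semidefinite matrices. -/
def IsCompletelyPositive {n : Type*} [Fintype n] [DecidableEq n]
    (Φ : Matrix n n ℂ →ₗ[ℂ] Matrix n n ℂ) : Prop :=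
  ∀ (k : ℕ) (A : Matrix (n × Fin k) (n × Fin k) ℂ), A.PosSemidef →
    (Matrix.of fun (p q : n × Fin k) =>
      Φ (Matrix.of fun i j => A (i, p.2) (j, q.2)) p.1 q.1).PosSemidef

/-- A quantum channel: completely positive and trace preserving. -/
def IsQuantumChannel {n : Type*} [Fintype n] [DecidableEq n]
    (Φ : Matrix n n ℂ →ₗ[ℂ] Matrix n n ℂ) : Prop :=
  IsCompletelyPositive Φ ∧ IsTracePreserving Φ

/-- The induced 1→1 norm of a superoperator: supremum of trace norms of images of
density matrices. -/
noncomputable def norm11 {n : Type*} [Fintype n] [DecidableEq n]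
    (M : Matrix n n ℂ → Matrix n n ℂ) : ℝ :=
  ⨆ ρ : {ρ : Matrix n n ℂ // IsDensityMatrix ρ}, traceNorm (M ρ)

/-- The induced 1→1 norm of a superoperator: supremum of trace norms of images of the
trace-norm unit ball. -/
noncomputable def norm11Ball {n : Type*} [Fintype n] [DecidableEq n]
    (M : Matrix n n ℂ → Matrix n n ℂ) : ℝ :=
  ⨆ X : {X : Matrix n n ℂ // traceNorm X ≤ 1}, traceNorm (M X)



section Aux
variable {n : Type*} [Fintype n] [DecidableEq n]
open scoped MatrixOrder

lemma diag_re_nonneg {M : Matrix n n ℂ} (hM : M.PosSemidef) (i : n) : 0 ≤ (M i i).re := by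
  have h := hM.re_dotProduct_nonneg (Pi.single i 1)
  have e : star (Pi.single i 1) ⬝ᵥ (M *ᵥ Pi.single i 1) = M i i := by
    simp [Matrix.mulVec_single, dotProduct, Pi.single_apply, apply_ite]
  rwa [e] at h

lemma trace_re_nonneg {M : Matrix n n ℂ} (hM : M.PosSemidef) : 0 ≤ M.trace.re := by
  rw [Matrix.trace, Complex.re_sum]
  exact Finset.sum_nonneg fun i _ => diag_re_nonneg hM i

lemma traceNorm_eq_of_sq {A S : Matrix n n ℂ} (hS : S.PosSemidef) (h : S ^ 2 = Aᴴ * A) :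
    traceNorm A = S.trace.re := by
  have hAA := Matrix.posSemidef_conjTranspose_mul_self A
  have key : hAA.1.cfc Real.sqrt = S := by
    rw [← hAA.1.cfc_eq, ← cfcₙ_eq_cfc (hf0 := Real.sqrt_zero), ← CFC.sqrt_eq_real_sqrt _ hAA.nonneg]
    exact CFC.sqrt_unique (by rw [← sq]; exact h) hS.nonneg
  rw [traceNorm, ← key]
  rfl

lemma traceNorm_psd {A : Matrix n n ℂ} (hA : A.PosSemidef) : traceNorm A = A.trace.re :=
  traceNorm_eq_of_sq hA (by rw [hA.1.eq, sq])

lemma traceNorm_neg (A : Matrix n n ℂ) : traceNorm (-A) = traceNorm A := by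
  have hsq := CFC.sqrt_mul_sqrt_self (Aᴴ * A) (Matrix.posSemidef_conjTranspose_mul_self A).nonneg
  rw [traceNorm_eq_of_sq (CFC.sqrt_nonneg (Aᴴ * A)).posSemidef
    (by rw [sq, hsq]; simp), traceNorm_eq_of_sq (CFC.sqrt_nonneg (Aᴴ * A)).posSemidef (by rw [sq, hsq])]

lemma trace_mul_psd_nonneg {A B : Matrix n n ℂ} (hA : A.PosSemidef) (hB : B.PosSemidef) :
    0 ≤ ((A * B).trace).re := by
  have hs := (CFC.sqrt_nonneg A).posSemidef
  have h1 : A * B = CFC.sqrt A * (CFC.sqrt A * B) := by rw [← mul_assoc, CFC.sqrt_mul_sqrt_self A hA.nonneg]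
  rw [h1, Matrix.trace_mul_comm, mul_assoc]
  have h2 : CFC.sqrt A * (B * CFC.sqrt A) = CFC.sqrt A * B * (CFC.sqrt A)ᴴ := by
    rw [hs.1.eq, mul_assoc]
  rw [h2]
  exact trace_re_nonneg (hB.mul_mul_conjTranspose_same (CFC.sqrt A))

lemma trace_proj_le {A P : Matrix n n ℂ} (hA : A.PosSemidef) (hP2 : P * P = P)
    (hI : (1 - P).PosSemidef) : ((P * A * P).trace).re ≤ A.trace.re := by
  have h1 : (P * A * P).trace = (A * P).trace := by
    rw [Matrix.trace_mul_cycle, hP2, Matrix.trace_mul_comm]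
  have h2 : 0 ≤ ((A * (1 - P)).trace).re := trace_mul_psd_nonneg hA hI
  rw [Matrix.mul_sub, mul_one, Matrix.trace_sub, Complex.sub_re] at h2
  rw [h1]; linarith

lemma herm_decomp {X : Matrix n n ℂ} (hX : X.IsHermitian) :
    ∃ P N : Matrix n n ℂ, P.PosSemidef ∧ N.PosSemidef ∧ X = P - N ∧
      traceNorm X = P.trace.re + N.trace.re ∧
      ∀ A B : Matrix n n ℂ, A.PosSemidef → B.PosSemidef → X = A - B →
        P.trace.re ≤ A.trace.re ∧ N.trace.re ≤ B.trace.re := by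
  set U : Matrix n n ℂ := (hX.eigenvectorUnitary : Matrix n n ℂ) with hUdef
  have hU1 : star U * U = 1 := Matrix.UnitaryGroup.star_mul_self _
  have hU2 : U * star U = 1 := hX.eigenvectorUnitary.2.2
  set lam : n → ℝ := hX.eigenvalues with hlam
  set cj : (n → ℝ) → Matrix n n ℂ :=
    fun c => U * diagonal (fun i => (c i : ℂ)) * star U with hcj
  have mul_cj : ∀ c d : n → ℝ, cj c * cj d = cj (fun i => c i * d i) := by
    intro c d
    have : cj c * cj d =
        U * (diagonal (fun i => (c i : ℂ)) * (star U * U) * diagonal (fun i => (d i : ℂ))) * star U := by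
      simp only [hcj, Matrix.mul_assoc]
    rw [this, hU1, mul_one, diagonal_mul_diagonal]
    simp only [hcj]
    norm_cast
  have trace_cj : ∀ c : n → ℝ, (cj c).trace.re = ∑ i, c i := by
    intro c
    rw [hcj]
    rw [Matrix.trace_mul_cycle, hU1, one_mul, Matrix.trace_diagonal]
    rw [Complex.re_sum]
    simp
  have psd_cj : ∀ c : n → ℝ, (∀ i, 0 ≤ c i) → (cj c).PosSemidef := by
    intro c hc
    have hd : (diagonal (fun i => (c i : ℂ))).PosSemidef :=
      posSemidef_diagonal_iff.mpr fun i => by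
        simpa using Complex.zero_le_real.mpr (hc i)
    have := hd.mul_mul_conjTranspose_same U
    simp only [hcj]
    rw [Matrix.star_eq_conjTranspose]
    exact this
  have herm_cj : ∀ c : n → ℝ, (cj c)ᴴ = cj c := by
    intro c
    have hd : (diagonal (fun i => (c i : ℂ)))ᴴ = diagonal (fun i => (c i : ℂ)) := by
      have h : (star fun i => ((c i):ℂ)) = fun i => ((c i):ℂ) :=
        funext fun i => Complex.conj_ofReal _
      rw [diagonal_conjTranspose, h]
    simp only [hcj, conjTranspose_mul, conjTranspose_conjTranspose,
      Matrix.star_eq_conjTranspose, hd, Matrix.mul_assoc]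
  have hsp : X = cj lam := by
    have := hX.spectral_theorem
    simp only [Unitary.conjStarAlgAut_apply] at this
    rw [hcj]
    exact this
  have sub_cj : ∀ c d : n → ℝ, cj c - cj d = cj (fun i => c i - d i) := by
    intro c d
    simp only [hcj]
    rw [← Matrix.sub_mul, ← Matrix.mul_sub]
    congr 2
    rw [diagonal_sub]
    congr 1
    funext i
    push_cast
    rfl
  have hzero : cj (fun _ => 0) = 0 := by simp [hcj]
  have neg_cj : ∀ c : n → ℝ, -(cj c) = cj (fun i => -(c i)) := by
    intro c
    rw [← zero_sub, ← hzero, sub_cj]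
    simp
  have hone : cj (fun _ => (1:ℝ)) = 1 := by
    simp only [hcj]
    rw [show (fun i : n => ((1:ℝ):ℂ)) = fun _ => (1:ℂ) by norm_num, diagonal_one, mul_one, hU2]
  set p : n → ℝ := fun i => max (lam i) 0 with hp
  set q : n → ℝ := fun i => max (-lam i) 0 with hq
  have habs : ∀ a : ℝ, |a| = max a 0 + max (-a) 0 := fun a => by
    rcases le_total 0 a with h | h
    · rw [abs_of_nonneg h, max_eq_left h, max_eq_right (neg_nonpos.mpr h), add_zero]
    · rw [abs_of_nonpos h, max_eq_right h, max_eq_left (neg_nonneg.mpr h), zero_add]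
  refine ⟨cj p, cj q, psd_cj p (fun i => le_max_right _ _), psd_cj q (fun i => le_max_right _ _),
    ?_, ?_, ?_⟩
  · rw [hsp, sub_cj]
    have hf : (fun i => p i - q i) = lam :=
      funext fun i => max_zero_sub_max_neg_zero_eq_self (lam i)
    rw [hf]
  · have hS : traceNorm X = ∑ i, |lam i| := by
      rw [traceNorm_eq_of_sq (psd_cj (fun i => |lam i|) (fun i => abs_nonneg _))
        (by rw [sq, mul_cj, hX.eq, hsp, mul_cj,
              show (fun i => |lam i| * |lam i|) = fun i => lam i * lam i from
                funext fun i => abs_mul_abs_self _]), trace_cj]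
    rw [hS, trace_cj, trace_cj, ← Finset.sum_add_distrib]
    exact Finset.sum_congr rfl fun i _ => habs (lam i)
  · intro A B hA hB hEq
    have conj_bound : ∀ {A B Pr : Matrix n n ℂ}, A.PosSemidef → B.PosSemidef →
        Pr.PosSemidef → Pr * Pr = Pr → (1 - Pr).PosSemidef →
        ((Pr * (A - B) * Pr).trace).re ≤ A.trace.re := by
      intro A B Pr hA hB hPrpsd hPr2 hI
      have h1 : Pr * (A - B) * Pr = Pr * A * Pr - Pr * B * Pr := by
        rw [Matrix.mul_sub, Matrix.sub_mul]
      have h2 := trace_proj_le hA hPr2 hI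
      have h3 : 0 ≤ ((Pr * B * Pr).trace).re := by
        have hh := hB.mul_mul_conjTranspose_same Pr
        rw [hPrpsd.1.eq] at hh
        exact trace_re_nonneg hh
      rw [h1, Matrix.trace_sub, Complex.sub_re]
      linarith
    have mk_proj : ∀ e : n → ℝ, (∀ i, e i = 0 ∨ e i = 1) →
        (cj e).PosSemidef ∧ cj e * cj e = cj e ∧ (1 - cj e).PosSemidef := by
      intro e he
      refine ⟨psd_cj e (fun i => by rcases he i with h | h <;> rw [h] <;> norm_num), ?_, ?_⟩
      · rw [mul_cj]
        have hf : (fun i => e i * e i) = e :=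
          funext fun i => by rcases he i with h | h <;> rw [h] <;> norm_num
        rw [hf]
      · rw [← hone, sub_cj]
        exact psd_cj _ (fun i => by rcases he i with h | h <;> rw [h] <;> norm_num)
    constructor
    · set e : n → ℝ := fun i => if 0 ≤ lam i then 1 else 0 with he
      obtain ⟨h1, h2, h3⟩ := mk_proj e (fun i => by rw [he]; dsimp only; split <;> simp)
      have hPX : cj e * X * cj e = cj p := by
        rw [hsp, mul_cj, mul_cj]
        have hf : (fun i => e i * lam i * e i) = p := funext fun i => by
          rw [he, hp]
          dsimp only
          split
          · next h => rw [max_eq_left h]; ring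
          · next h => rw [max_eq_right (le_of_not_ge (fun hc => h hc))]; ring
        rw [hf]
      calc (cj p).trace.re = ((cj e * (A - B) * cj e).trace).re := by rw [← hEq, hPX]
        _ ≤ A.trace.re := conj_bound hA hB h1 h2 h3
    · set e : n → ℝ := fun i => if lam i < 0 then 1 else 0 with he
      obtain ⟨h1, h2, h3⟩ := mk_proj e (fun i => by rw [he]; dsimp only; split <;> simp)
      have hNX : cj e * (B - A) * cj e = cj q := by
        have hBA : B - A = cj (fun i => -(lam i)) := by
          rw [← neg_cj, ← hsp, hEq, neg_sub]
        rw [hBA, mul_cj, mul_cj]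
        have hf : (fun i => e i * -lam i * e i) = q := funext fun i => by
          rw [he, hq]
          dsimp only
          split
          · next h => rw [max_eq_left (by linarith : (0:ℝ) ≤ -lam i)]; ring
          · next h => rw [max_eq_right (by push_neg at h; linarith : -lam i ≤ 0)]; ring
        rw [hf]
      calc (cj q).trace.re = ((cj e * (B - A) * cj e).trace).re := by rw [hNX]
        _ ≤ B.trace.re := conj_bound hB hA h1 h2 h3


lemma traceNorm_zero' : traceNorm (0 : Matrix n n ℂ) = 0 := by
  rw [traceNorm_psd Matrix.PosSemidef.zero]
  simp

lemma traceNorm_sub_le_psd {A B : Matrix n n ℂ} (hA : A.PosSemidef) (hB : B.PosSemidef) :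
    traceNorm (A - B) ≤ A.trace.re + B.trace.re := by
  obtain ⟨P, N, hP, hN, heq, hnorm, hbd⟩ := herm_decomp (hA.1.sub hB.1)
  obtain ⟨h1, h2⟩ := hbd A B hA hB rfl
  rw [hnorm]
  linarith

lemma traceNorm_add_le_herm {X Y : Matrix n n ℂ} (hX : X.IsHermitian) (hY : Y.IsHermitian) :
    traceNorm (X + Y) ≤ traceNorm X + traceNorm Y := by
  obtain ⟨P, N, hP, hN, hXe, hXn, -⟩ := herm_decomp hX
  obtain ⟨Q, M, hQ, hM, hYe, hYn, -⟩ := herm_decomp hY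
  have h : X + Y = (P + Q) - (N + M) := by rw [hXe, hYe]; abel
  rw [h, hXn, hYn]
  have := traceNorm_sub_le_psd (hP.add hQ) (hN.add hM)
  rw [Matrix.trace_add, Matrix.trace_add, Complex.add_re, Complex.add_re] at this
  linarith

variable {Φ : Matrix n n ℂ →ₗ[ℂ] Matrix n n ℂ}

lemma cp_psd (hΦ : IsCompletelyPositive Φ) {A : Matrix n n ℂ} (hA : A.PosSemidef) :
    (Φ A).PosSemidef := by
  have h := hΦ 1 (Matrix.of fun (p q : n × Fin 1) => A p.1 q.1)
    (hA.submatrix (Prod.fst : n × Fin 1 → n))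
  have h2 := h.submatrix (fun i : n => (i, (0 : Fin 1)))
  have he : Φ A = (Matrix.of fun (p q : n × Fin 1) =>
      Φ (Matrix.of fun i j => (Matrix.of fun (p q : n × Fin 1) => A p.1 q.1) (i, p.2) (j, q.2))
        p.1 q.1).submatrix (fun i : n => (i, (0 : Fin 1))) (fun i : n => (i, (0 : Fin 1))) := by
    ext i j
    rfl
  rw [he]
  exact h2

lemma channel_herm (hΦ : IsQuantumChannel Φ) {X : Matrix n n ℂ} (hX : X.IsHermitian) :
    (Φ X).IsHermitian := by
  obtain ⟨P, N, hP, hN, heq, -, -⟩ := herm_decomp hX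
  rw [heq, map_sub]
  exact ((cp_psd hΦ.1 hP).1).sub ((cp_psd hΦ.1 hN).1)

lemma channel_density (hΦ : IsQuantumChannel Φ) {ρ : Matrix n n ℂ} (hρ : IsDensityMatrix ρ) :
    IsDensityMatrix (Φ ρ) := ⟨cp_psd hΦ.1 hρ.1, by rw [hΦ.2 ρ, hρ.2]⟩

lemma iterate_density (hΦ : IsQuantumChannel Φ) (m : ℕ) {ρ : Matrix n n ℂ}
    (hρ : IsDensityMatrix ρ) : IsDensityMatrix ((⇑Φ)^[m] ρ) := by
  induction m with
  | zero => simpa using hρ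
  | succ m ih =>
    rw [Function.iterate_succ_apply']
    exact channel_density hΦ ih

lemma traceNorm_channel_le (hΦ : IsQuantumChannel Φ) {X : Matrix n n ℂ} (hX : X.IsHermitian) :
    traceNorm (Φ X) ≤ traceNorm X := by
  obtain ⟨P, N, hP, hN, heq, hnorm, -⟩ := herm_decomp hX
  calc traceNorm (Φ X) = traceNorm (Φ P - Φ N) := by rw [heq, map_sub]
    _ ≤ P.trace.re + N.trace.re := by
        have h := traceNorm_sub_le_psd (cp_psd hΦ.1 hP) (cp_psd hΦ.1 hN)
        rwa [hΦ.2 P, hΦ.2 N] at h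
    _ = traceNorm X := hnorm.symm

lemma le_norm11_of_density {K1 K2 : Matrix n n ℂ →ₗ[ℂ] Matrix n n ℂ}
    (h1 : IsQuantumChannel K1) (h2 : IsQuantumChannel K2) {ρ : Matrix n n ℂ}
    (hρ : IsDensityMatrix ρ) :
    traceNorm (K1 ρ - K2 ρ) ≤ norm11 (fun σ => K1 σ - K2 σ) := by
  have hb : BddAbove (Set.range fun σ : {σ : Matrix n n ℂ // IsDensityMatrix σ} =>
      traceNorm ((fun σ => K1 σ - K2 σ) σ.1)) := by
    refine ⟨2, ?_⟩
    rintro x ⟨σ, rfl⟩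
    have h := traceNorm_sub_le_psd (cp_psd h1.1 σ.2.1) (cp_psd h2.1 σ.2.1)
    rw [h1.2 σ.1, h2.2 σ.1, σ.2.2] at h
    norm_num at h
    exact h
  exact le_ciSup hb (⟨ρ, hρ⟩ : {σ : Matrix n n ℂ // IsDensityMatrix σ})

lemma telescope {K1 K2 : Matrix n n ℂ →ₗ[ℂ] Matrix n n ℂ}
    (hK1 : IsQuantumChannel K1) (hK2 : IsQuantumChannel K2) (m : ℕ) {ρ : Matrix n n ℂ}
    (hρ : IsDensityMatrix ρ) :
    traceNorm ((⇑K1)^[m] ρ - (⇑K2)^[m] ρ) ≤ m * norm11 (fun σ => K1 σ - K2 σ) := by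
  induction m with
  | zero => simp [traceNorm_zero']
  | succ m ih =>
    set s := norm11 (fun σ => K1 σ - K2 σ) with hs
    have hd2 := iterate_density hK2 m hρ
    have hd1 := iterate_density hK1 m hρ
    have hX : ((⇑K1)^[m] ρ - (⇑K2)^[m] ρ).IsHermitian := hd1.1.1.sub hd2.1.1
    have step : (⇑K1)^[m+1] ρ - (⇑K2)^[m+1] ρ
        = K1 ((⇑K1)^[m] ρ - (⇑K2)^[m] ρ) + (K1 ((⇑K2)^[m] ρ) - K2 ((⇑K2)^[m] ρ)) := by
      rw [Function.iterate_succ_apply', Function.iterate_succ_apply', map_sub]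
      abel
    have t1 : traceNorm (K1 ((⇑K1)^[m] ρ - (⇑K2)^[m] ρ)) ≤ m * s :=
      le_trans (traceNorm_channel_le hK1 hX) ih
    have t2 : traceNorm (K1 ((⇑K2)^[m] ρ) - K2 ((⇑K2)^[m] ρ)) ≤ s :=
      le_norm11_of_density hK1 hK2 hd2
    have tri := traceNorm_add_le_herm (channel_herm hK1 hX)
      ((cp_psd hK1.1 hd2.1).1.sub (cp_psd hK2.1 hd2.1).1)
    rw [step]
    push_cast
    nlinarith [tri, t1, t2]

end Aux

theorem mixing_time_of_close_channel {n : Type*} [Fintype n] [DecidableEq n]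
    (K1 K2 : Matrix n n ℂ →ₗ[ℂ] Matrix n n ℂ)
    (hK1 : IsQuantumChannel K1) (hK2 : IsQuantumChannel K2)
    (ρ1 ρ2 : Matrix n n ℂ) (hρ1 : IsDensityMatrix ρ1) (hρ2 : IsDensityMatrix ρ2)
    (hfix1 : K1 ρ1 = ρ1) (hfix2 : K2 ρ2 = ρ2)
    (τ : ℕ) (hτ : 0 < τ) (ε : ℝ)
    (hmix : ∀ ρ : Matrix n n ℂ, IsDensityMatrix ρ → traceNorm ((⇑K1)^[τ] ρ - ρ1) ≤ ε / 2)
    (hclose : (τ : ℝ) * norm11 (fun ρ => K1 ρ - K2 ρ) ≤ ε / 2) :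
    ∀ ρ : Matrix n n ℂ, IsDensityMatrix ρ →
      traceNorm ((⇑K2)^[τ] ρ - ρ2) ≤ 2 * ε := by
  intro ρ hρ
  set s := norm11 (fun σ => K1 σ - K2 σ) with hs
  have hτs : ∀ {σ : Matrix n n ℂ}, IsDensityMatrix σ →
      traceNorm ((⇑K1)^[τ] σ - (⇑K2)^[τ] σ) ≤ ε / 2 :=
    fun hσ => le_trans (telescope hK1 hK2 τ hσ) hclose
  have hρ2fix : (⇑K2)^[τ] ρ2 = ρ2 := Function.iterate_fixed hfix2 τ
  have hA := iterate_density hK2 τ hρ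
  have hB := iterate_density hK1 τ hρ
  have hC := iterate_density hK1 τ hρ2
  -- distance of fixed points
  have h12 : traceNorm (ρ1 - ρ2) ≤ ε := by
    have e1 : ρ1 - ρ2 = (ρ1 - (⇑K1)^[τ] ρ2) + ((⇑K1)^[τ] ρ2 - ρ2) := by abel
    have tX : traceNorm (ρ1 - (⇑K1)^[τ] ρ2) ≤ ε / 2 := by
      have := hmix ρ2 hρ2
      rwa [← traceNorm_neg, neg_sub] at this
    have tY : traceNorm ((⇑K1)^[τ] ρ2 - ρ2) ≤ ε / 2 := by
      have := hτs hρ2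
      rwa [hρ2fix] at this
    have tri := traceNorm_add_le_herm (hρ1.1.1.sub hC.1.1) (hC.1.1.sub hρ2.1.1)
    rw [← e1] at tri
    linarith
  have e2 : (⇑K2)^[τ] ρ - ρ2 = ((⇑K2)^[τ] ρ - (⇑K1)^[τ] ρ)
      + (((⇑K1)^[τ] ρ - ρ1) + (ρ1 - ρ2)) := by abel
  have t1 : traceNorm ((⇑K2)^[τ] ρ - (⇑K1)^[τ] ρ) ≤ ε / 2 := by
    have := hτs hρ
    rwa [← traceNorm_neg, neg_sub] at this
  have t2 : traceNorm ((⇑K1)^[τ] ρ - ρ1) ≤ ε / 2 := hmix ρ hρ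
  have tri1 := traceNorm_add_le_herm (hB.1.1.sub hρ1.1.1) (hρ1.1.1.sub hρ2.1.1)
  have tri2 := traceNorm_add_le_herm (hA.1.1.sub hB.1.1)
    ((hB.1.1.sub hρ1.1.1).add (hρ1.1.1.sub hρ2.1.1))
  rw [← e2] at tri2
  linarith
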